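/- Let (X,R,μ) and (Y,R',ν) be probability spaces over K and let Φ : (R,μ) → (R',ν) be a measure algebra isomorphism. Then the induced map on step functions is an isometry for the seminorms ‖f‖_μ = sup_{x∈X} |f(x)|·N_μ(x) and ‖g‖_ν = sup_{y∈Y} |g(y)|·N_ν(y): for any pairwise disjoint A₁,…,A_m ∈ R and any scalars α₁,…,α_m ∈ K, sup_{y∈Y} |Σ_{i=1}^m αᵢ·χ_{Φ(Aᵢ)}(y)|·N_ν(y) = sup_{x∈X} |Σ_{i=1}^m αᵢ·χ_{Aᵢ}(x)|·N_μ(x), where χ_A denotes the indicator function of A. -/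

import Mathlib

open scoped Classical

/-- A covering ring of subsets of `X`: it covers `X` and is closed under
intersections, unions and differences. -/
def IsCoveringRing {X : Type*} (R : Set (Set X)) : Prop :=
  (∀ x : X, ∃ A ∈ R, x ∈ A) ∧
    ∀ A ∈ R, ∀ B ∈ R, A ∩ B ∈ R ∧ A ∪ B ∈ R ∧ A \ B ∈ R

/-- `R` is separating: distinct points can be separated by a member of `R`. -/
def Separating {X : Type*} (R : Set (Set X)) : Prop :=
  ∀ x y : X, x ≠ y → ∃ A ∈ R, x ∈ A ∧ y ∉ A

/-- A shrinking collection: the intersection of any two members contains a member. -/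
def Shrinking {X : Type*} (𝒜 : Set (Set X)) : Prop :=
  ∀ A ∈ 𝒜, ∀ B ∈ 𝒜, ∃ C ∈ 𝒜, C ⊆ A ∩ B

/-- A `K`-valued measure on a covering ring `R`: additive, bounded and continuous. -/
structure IsKMeasure {X : Type*} {K : Type*} [NormedField K]
    (R : Set (Set X)) (μ : Set X → K) : Prop where
  additive : ∀ A ∈ R, ∀ B ∈ R, Disjoint A B → μ (A ∪ B) = μ A + μ B
  bounded : ∀ A ∈ R, ∃ M : ℝ, ∀ B ∈ R, B ⊆ A → ‖μ B‖ ≤ M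
  cont : ∀ 𝒜 ⊆ R, Shrinking 𝒜 → ⋂₀ 𝒜 = ∅ →
    ∀ ε : ℝ, 0 < ε → ∃ A₀ ∈ 𝒜, ∀ A ∈ 𝒜, A ⊆ A₀ → ‖μ A‖ < ε

/-- `‖A‖_μ = sup {|μ B| : B ∈ R, B ⊆ A}`. -/
noncomputable def setNorm {X K : Type*} [NormedField K]
    (R : Set (Set X)) (μ : Set X → K) (A : Set X) : ℝ :=
  sSup {r : ℝ | ∃ B ∈ R, B ⊆ A ∧ r = ‖μ B‖}

/-- `N_μ(x) = inf {‖A‖_μ : A ∈ R, x ∈ A}`. -/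
noncomputable def normFun {X K : Type*} [NormedField K]
    (R : Set (Set X)) (μ : Set X → K) (x : X) : ℝ :=
  sInf {r : ℝ | ∃ A ∈ R, x ∈ A ∧ r = setNorm R μ A}

/-- `‖f‖_μ = sup_{x ∈ X} |f x| ⬝ N_μ(x)`. -/
noncomputable def fNorm {X K : Type*} [NormedField K]
    (R : Set (Set X)) (μ : Set X → K) (f : X → K) : ℝ :=
  sSup {r : ℝ | ∃ x : X, r = ‖f x‖ * normFun R μ x}

/-- A probability space: `R` is a covering algebra and `μ(X) = 1`. -/
def IsProbSpace {X K : Type*} [NormedField K] (R : Set (Set X)) (μ : Set X → K) : Prop :=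
  IsCoveringRing R ∧ Set.univ ∈ R ∧ IsKMeasure R μ ∧ μ Set.univ = 1

/-- A measure algebra isomorphism `(R,μ) → (R',ν)`. -/
def IsMeasAlgIso {X Y K : Type*} [NormedField K] (R : Set (Set X)) (μ : Set X → K)
    (R' : Set (Set Y)) (ν : Set Y → K) (Φ : Set X → Set Y) : Prop :=
  Set.BijOn Φ R R' ∧
    (∀ A ∈ R, ∀ B ∈ R, Φ (A ∪ B) = Φ A ∪ Φ B) ∧
    (∀ A ∈ R, Φ (Set.univ \ A) = Set.univ \ Φ A) ∧
    (∀ A ∈ R, ν (Φ A) = μ A)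

/-- An invertible measure preserving transformation of `(X,R,μ)`. -/
def IsInvMPT {X K : Type*} [NormedField K] (R : Set (Set X)) (μ : Set X → K)
    (T : X → X) : Prop :=
  Function.Bijective T ∧
    (∀ A ∈ R, T '' A ∈ R) ∧ (∀ A ∈ R, T ⁻¹' A ∈ R) ∧
    (∀ A ∈ R, μ (T '' A) = μ A) ∧ (∀ A ∈ R, μ (T ⁻¹' A) = μ A)

/-- A finite partition of `X` by pairwise disjoint nonempty members of `R`. -/
def IsFinPartition {X : Type*} (R : Set (Set X)) (α : Finset (Set X)) : Prop :=
  (∀ A ∈ α, A ∈ R) ∧ (∀ A ∈ α, A ≠ ∅) ∧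
    (∀ A ∈ α, ∀ B ∈ α, A ≠ B → Disjoint A B) ∧
    ⋃₀ (α : Set (Set X)) = Set.univ

/-- The join `α ∨ β` of two partitions, discarding empty intersections. -/
noncomputable def pJoin {X : Type*} (α β : Finset (Set X)) : Finset (Set X) :=
  (Finset.image₂ (fun A B => A ∩ B) α β).filter (fun C => C ≠ ∅)

/-- `M(α)`: the number of members of `α` of positive norm. -/
noncomputable def Mcard {X K : Type*} [NormedField K] (R : Set (Set X)) (μ : Set X → K)
    (α : Finset (Set X)) : ℕ :=
  (α.filter (fun A => 0 < setNorm R μ A)).card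

/-- `H_μ(α) = (min {‖A‖_μ : A ∈ α, ‖A‖_μ > 0}) * log₂ M(α)` (and `0` if `M(α) = 0`,
since `sInf ∅ = 0` and `log₂ 0 = 0` in Mathlib). -/
noncomputable def Hent {X K : Type*} [NormedField K] (R : Set (Set X)) (μ : Set X → K)
    (α : Finset (Set X)) : ℝ :=
  sInf {r : ℝ | ∃ A ∈ α, 0 < setNorm R μ A ∧ r = setNorm R μ A} *
    Real.logb 2 (Mcard R μ α)

/-- `joinSeq T α n = α ∨ T⁻¹α ∨ ⋯ ∨ T^{-n}α`. -/
noncomputable def joinSeq {X : Type*} (T : X → X) (α : Finset (Set X)) : ℕ → Finset (Set X)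
  | 0 => α
  | n + 1 => pJoin (joinSeq T α n) (α.image (fun A => T^[n + 1] ⁻¹' A))

/-- `h_μ(T,α) = lim_{n→∞} H_μ(α ∨ T⁻¹α ∨ ⋯ ∨ T^{-(n-1)}α)/n`. -/
noncomputable def hMeasPart {X K : Type*} [NormedField K] (R : Set (Set X)) (μ : Set X → K)
    (T : X → X) (α : Finset (Set X)) : ℝ :=
  Filter.limUnder Filter.atTop (fun n : ℕ => Hent R μ (joinSeq T α n) / (n + 1))

/-- `h_μ(T) = sup_α h_μ(T,α)` over finite partitions `α` of `X` relative to `R`. -/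
noncomputable def hMeas {X K : Type*} [NormedField K] (R : Set (Set X)) (μ : Set X → K)
    (T : X → X) : ℝ :=
  sSup {r : ℝ | ∃ α : Finset (Set X), IsFinPartition R α ∧ r = hMeasPart R μ T α}

/-- The partition `α(𝒰)` associated to a finite cover `𝒰`: nonempty sets of the form
`A₁ ∩ ⋯ ∩ A_k` where each `Aᵢ` is `Uᵢ` or `X ∖ Uᵢ`. -/
noncomputable def coverPart {X : Type*} (𝒰 : Finset (Set X)) : Finset (Set X) :=
  ((𝒰.powerset).image fun S => (⋂ U ∈ S, U) ∩ ⋂ U ∈ 𝒰 \ S, (Set.univ \ U)).filter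
    (fun C => C ≠ ∅)

/-- The join `𝒰 ∨ 𝒲` of two covers. -/
noncomputable def cJoin {X : Type*} (𝒰 𝒲 : Finset (Set X)) : Finset (Set X) :=
  Finset.image₂ (fun U W => U ∩ W) 𝒰 𝒲

/-- `N(𝒰)`: the least cardinality of a subcover of `𝒰`. -/
noncomputable def coverN {X : Type*} (𝒰 : Finset (Set X)) : ℕ :=
  sInf {n : ℕ | ∃ 𝒱 : Finset (Set X), 𝒱 ⊆ 𝒰 ∧ ⋃₀ (𝒱 : Set (Set X)) = Set.univ ∧ 𝒱.card = n}

/-- `H_top(𝒰) = log₂ N(𝒰)`. -/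
noncomputable def Htop {X : Type*} (𝒰 : Finset (Set X)) : ℝ :=
  Real.logb 2 (coverN 𝒰)

/-- `cJoinSeq T 𝒰 n = 𝒰 ∨ T⁻¹𝒰 ∨ ⋯ ∨ T^{-n}𝒰`. -/
noncomputable def cJoinSeq {X : Type*} (T : X → X) (𝒰 : Finset (Set X)) : ℕ → Finset (Set X)
  | 0 => 𝒰
  | n + 1 => cJoin (cJoinSeq T 𝒰 n) (𝒰.image (fun U => T^[n + 1] ⁻¹' U))

/-- `h_top(T,𝒰) = lim_{n→∞} H_top(𝒰 ∨ T⁻¹𝒰 ∨ ⋯ ∨ T^{-(n-1)}𝒰)/n`. -/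
noncomputable def hTopCov {X : Type*} (T : X → X) (𝒰 : Finset (Set X)) : ℝ :=
  Filter.limUnder Filter.atTop (fun n : ℕ => Htop (cJoinSeq T 𝒰 n) / (n + 1))

/-- `h_top(T) = sup_𝒰 h_top(T,𝒰)` over finite open covers `𝒰` of `X` for the
topology `t`. -/
noncomputable def hTop {X : Type*} (t : TopologicalSpace X) (T : X → X) : ℝ :=
  sSup {r : ℝ | ∃ 𝒰 : Finset (Set X), (∀ U ∈ 𝒰, t.IsOpen U) ∧
    ⋃₀ (𝒰 : Set (Set X)) = Set.univ ∧ r = hTopCov T 𝒰}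

section Aux

variable {X K : Type*} [NontriviallyNormedField K] {R : Set (Set X)} {μ : Set X → K}

lemma aux_univ_mem (h : IsProbSpace R μ) : Set.univ ∈ R := h.2.1

lemma aux_empty_mem (h : IsProbSpace R μ) : (∅ : Set X) ∈ R := by
  have := (h.1.2 _ h.2.1 _ h.2.1).2.2
  simpa using this

lemma aux_mu_empty (h : IsProbSpace R μ) : μ ∅ = 0 := by
  have h2 := h.2.2.1.additive ∅ (aux_empty_mem h) ∅ (aux_empty_mem h) (by simp)
  simp only [Set.union_self] at h2
  have : μ ∅ + 0 = μ ∅ + μ ∅ := by rw [add_zero]; exact h2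
  exact (add_left_cancel this).symm

lemma aux_nonempty (h : IsProbSpace R μ) : Nonempty X := by
  by_contra hX
  have hu : (Set.univ : Set X) = ∅ := by
    simp [Set.univ_eq_empty_iff, not_nonempty_iff.mp hX]
  have h1 : μ Set.univ = 1 := h.2.2.2
  rw [hu, aux_mu_empty h] at h1
  exact one_ne_zero h1.symm

/-- The defining set of `setNorm`. -/
lemma aux_setNormSet_nonempty (h : IsProbSpace R μ) (A : Set X) :
    {r : ℝ | ∃ B ∈ R, B ⊆ A ∧ r = ‖μ B‖}.Nonempty :=
  ⟨‖μ ∅‖, ∅, aux_empty_mem h, Set.empty_subset A, rfl⟩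

lemma aux_setNormSet_bdd (h : IsProbSpace R μ) (A : Set X) :
    BddAbove {r : ℝ | ∃ B ∈ R, B ⊆ A ∧ r = ‖μ B‖} := by
  obtain ⟨M, hM⟩ := h.2.2.1.bounded Set.univ (aux_univ_mem h)
  exact ⟨M, by rintro r ⟨B, hB, -, rfl⟩; exact hM B hB (Set.subset_univ B)⟩

lemma aux_norm_le_setNorm (h : IsProbSpace R μ) {A B : Set X} (hB : B ∈ R) (hBA : B ⊆ A) :
    ‖μ B‖ ≤ setNorm R μ A :=
  le_csSup (aux_setNormSet_bdd h A) ⟨B, hB, hBA, rfl⟩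

lemma aux_setNorm_nonneg (h : IsProbSpace R μ) (A : Set X) : 0 ≤ setNorm R μ A := by
  have := aux_norm_le_setNorm h (aux_empty_mem h) (Set.empty_subset A)
  exact le_trans (norm_nonneg _) this

lemma aux_setNorm_le (h : IsProbSpace R μ) {A : Set X} {t : ℝ}
    (ht : ∀ B ∈ R, B ⊆ A → ‖μ B‖ ≤ t) : setNorm R μ A ≤ t := by
  apply csSup_le (aux_setNormSet_nonempty h A)
  rintro r ⟨B, hB, hBA, rfl⟩
  exact ht B hB hBA

lemma aux_setNorm_union_le (hna : IsNonarchimedean (norm : K → ℝ))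
    (h : IsProbSpace R μ) {C D : Set X} {s : ℝ}
    (hC : C ∈ R) (hD : D ∈ R) (h1 : setNorm R μ C ≤ s) (h2 : setNorm R μ D ≤ s) :
    setNorm R μ (C ∪ D) ≤ s := by
  apply aux_setNorm_le h
  intro B hB hBs
  have hBC : B ∩ C ∈ R := (h.1.2 B hB C hC).1
  have hBD : B \ C ∈ R := (h.1.2 B hB C hC).2.2
  have hadd : μ B = μ (B ∩ C) + μ (B \ C) := by
    have := h.2.2.1.additive (B ∩ C) hBC (B \ C) hBD
      (by rw [Set.disjoint_left]; rintro x ⟨-, hx⟩; exact fun hx' => hx'.2 hx)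
    rw [Set.inter_union_diff] at this
    exact this
  rw [hadd]
  refine le_trans (hna _ _) (max_le ?_ ?_)
  · exact le_trans (aux_norm_le_setNorm h hBC Set.inter_subset_right) h1
  · refine le_trans (aux_norm_le_setNorm h hBD ?_) h2
    rintro x ⟨hxB, hxC⟩
    rcases hBs hxB with hc | hd
    · exact absurd hc hxC
    · exact hd

lemma aux_biUnion_mem (h : IsProbSpace R μ) (F : Finset X) (C : X → Set X)
    (hC : ∀ x, C x ∈ R) : (⋃ x ∈ F, C x) ∈ R := by
  classical
  induction F using Finset.induction_on with
  | empty => simpa using aux_empty_mem h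
  | insert _ _ hx ih =>
    rw [Finset.set_biUnion_insert]
    exact (h.1.2 _ (hC _) _ ih).2.1

lemma aux_setNorm_biUnion_le (hna : IsNonarchimedean (norm : K → ℝ))
    (h : IsProbSpace R μ) {s : ℝ} (hs : 0 ≤ s) (F : Finset X) (C : X → Set X)
    (hC : ∀ x, C x ∈ R) (hle : ∀ x ∈ F, setNorm R μ (C x) ≤ s) :
    setNorm R μ (⋃ x ∈ F, C x) ≤ s := by
  classical
  induction F using Finset.induction_on with
  | empty =>
    have he : (⋃ x ∈ (∅ : Finset X), C x) = (∅ : Set X) := by simp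
    rw [he]
    apply aux_setNorm_le h
    intro B hB hBe
    have : B = ∅ := Set.subset_empty_iff.mp hBe
    rw [this, aux_mu_empty h]
    simpa using hs
  | @insert a F ha ih =>
    rw [Finset.set_biUnion_insert]
    refine aux_setNorm_union_le hna h (hC a) (aux_biUnion_mem h F C hC)
      (hle a (Finset.mem_insert_self a F)) (ih fun x hx => hle x (Finset.mem_insert_of_mem hx))

lemma aux_normFunSet_nonempty (h : IsProbSpace R μ) (x : X) :
    {r : ℝ | ∃ A ∈ R, x ∈ A ∧ r = setNorm R μ A}.Nonempty :=
  ⟨setNorm R μ Set.univ, Set.univ, aux_univ_mem h, Set.mem_univ x, rfl⟩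

lemma aux_normFunSet_bddBelow (h : IsProbSpace R μ) (x : X) :
    BddBelow {r : ℝ | ∃ A ∈ R, x ∈ A ∧ r = setNorm R μ A} :=
  ⟨0, by rintro r ⟨A, hA, -, rfl⟩; exact aux_setNorm_nonneg h A⟩

lemma aux_normFun_nonneg (h : IsProbSpace R μ) (x : X) : 0 ≤ normFun R μ x :=
  le_csInf (aux_normFunSet_nonempty h x)
    (by rintro r ⟨A, hA, -, rfl⟩; exact aux_setNorm_nonneg h A)

lemma aux_normFun_le (h : IsProbSpace R μ) {A : Set X} {x : X} (hA : A ∈ R) (hx : x ∈ A) :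
    normFun R μ x ≤ setNorm R μ A :=
  csInf_le (aux_normFunSet_bddBelow h x) ⟨A, hA, hx, rfl⟩

/-- Key lemma: `‖A‖_μ ≤ sup_{x ∈ A} N_μ(x)` (via continuity of `μ`). -/
lemma aux_setNorm_le_of_normFun (hna : IsNonarchimedean (norm : K → ℝ))
    (h : IsProbSpace R μ) {A : Set X} (hA : A ∈ R) {t : ℝ} (ht : 0 ≤ t)
    (hN : ∀ x ∈ A, normFun R μ x ≤ t) : setNorm R μ A ≤ t := by
  classical
  apply aux_setNorm_le h
  intro B hB hBA
  refine le_of_forall_pos_le_add ?_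
  intro ε hε
  have htε : 0 < t + ε := by linarith
  -- choose, for each x, a set C x ∈ R with x ∈ C x (if x ∈ B) and small norm
  have hch : ∀ x : X, ∃ C : Set X, C ∈ R ∧ (x ∈ B → x ∈ C) ∧ setNorm R μ C < t + ε := by
    intro x
    by_cases hx : x ∈ B
    · have hlt : normFun R μ x < t + ε := lt_of_le_of_lt (hN x (hBA hx)) (by linarith)
      obtain ⟨r, ⟨C, hC, hxC, rfl⟩, hr⟩ :=
        exists_lt_of_csInf_lt (aux_normFunSet_nonempty h x) hlt
      exact ⟨C, hC, fun _ => hxC, hr⟩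
    · refine ⟨∅, aux_empty_mem h, fun hx' => absurd hx' hx, ?_⟩
      have : setNorm R μ (∅ : Set X) ≤ 0 := by
        apply aux_setNorm_le h
        intro D hD hDe
        rw [Set.subset_empty_iff.mp hDe, aux_mu_empty h]; simp
      exact lt_of_le_of_lt this htε
  choose C hC1 hC2 hC3 using hch
  -- the shrinking collection
  set 𝒜 : Set (Set X) := Set.range (fun F : Finset X => B \ ⋃ x ∈ F, C x) with h𝒜
  have h𝒜R : 𝒜 ⊆ R := by
    rintro D ⟨F, rfl⟩
    exact (h.1.2 B hB _ (aux_biUnion_mem h F C hC1)).2.2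
  have hshr : Shrinking 𝒜 := by
    rintro D1 ⟨F1, rfl⟩ D2 ⟨F2, rfl⟩
    refine ⟨B \ ⋃ x ∈ F1 ∪ F2, C x, ⟨F1 ∪ F2, rfl⟩, ?_⟩
    rw [Finset.set_biUnion_union]
    intro x hx
    exact ⟨⟨hx.1, fun hc => hx.2 (Set.mem_union_left _ hc)⟩,
      ⟨hx.1, fun hc => hx.2 (Set.mem_union_right _ hc)⟩⟩
  have hint : ⋂₀ 𝒜 = ∅ := by
    rw [Set.eq_empty_iff_forall_notMem]
    intro x hx
    by_cases hxB : x ∈ B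
    · have hmem : x ∈ B \ ⋃ y ∈ ({x} : Finset X), C y := hx _ ⟨({x} : Finset X), rfl⟩
      exact hmem.2 (by simpa using hC2 x hxB)
    · have hmem : x ∈ B \ ⋃ y ∈ (∅ : Finset X), C y := hx _ ⟨(∅ : Finset X), rfl⟩
      exact hxB hmem.1
  obtain ⟨A₀, hA₀mem, hA₀⟩ := h.2.2.1.cont 𝒜 h𝒜R hshr hint ε hε
  obtain ⟨F, rfl⟩ := hA₀mem
  have hsmall : ‖μ (B \ ⋃ x ∈ F, C x)‖ < ε := hA₀ _ ⟨F, rfl⟩ le_rfl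
  set U : Set X := ⋃ x ∈ F, C x with hU
  have hUR : U ∈ R := aux_biUnion_mem h F C hC1
  have hBU : B ∩ U ∈ R := (h.1.2 B hB U hUR).1
  have hBdU : B \ U ∈ R := (h.1.2 B hB U hUR).2.2
  have hadd : μ B = μ (B ∩ U) + μ (B \ U) := by
    have := h.2.2.1.additive (B ∩ U) hBU (B \ U) hBdU
      (by rw [Set.disjoint_left]; rintro x ⟨-, hx⟩; exact fun hx' => hx'.2 hx)
    rw [Set.inter_union_diff] at this
    exact this
  rw [hadd]
  refine le_trans (hna _ _) (max_le ?_ ?_)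
  · have h1 : setNorm R μ U ≤ t + ε :=
      aux_setNorm_biUnion_le hna h (le_of_lt htε) F C hC1 fun x _ => le_of_lt (hC3 x)
    exact le_trans (aux_norm_le_setNorm h hBU Set.inter_subset_right) h1
  · exact le_trans (le_of_lt hsmall) (by linarith)

/-- `fNorm` of a disjoint step function equals the max of `‖c i‖ * ‖A i‖`. -/
lemma aux_fNorm_step (hna : IsNonarchimedean (norm : K → ℝ)) (h : IsProbSpace R μ)
    (m : ℕ) (A : Fin m → Set X) (hA : ∀ i, A i ∈ R)
    (hdisj : ∀ i j : Fin m, i ≠ j → Disjoint (A i) (A j)) (c : Fin m → K) :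
    fNorm R μ (fun x => ∑ i, Set.indicator (A i) (fun _ => c i) x) =
      sSup (insert (0 : ℝ) {r : ℝ | ∃ i, r = ‖c i‖ * setNorm R μ (A i)}) := by
  classical
  have hX : Nonempty X := aux_nonempty h
  set f : X → K := fun x => ∑ i, Set.indicator (A i) (fun _ => c i) x with hf
  -- values of f
  have hfval : ∀ (i : Fin m) (x : X), x ∈ A i → f x = c i := by
    intro i x hx
    show (∑ j, Set.indicator (A j) (fun _ => c j) x) = c i
    rw [Finset.sum_eq_single_of_mem i (Finset.mem_univ i)]
    · simp [Set.indicator_of_mem hx]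
    · intro j _ hj
      have : x ∉ A j := Set.disjoint_left.mp (hdisj i j (Ne.symm hj)) hx
      simp [Set.indicator_of_notMem this]
  have hfval0 : ∀ x : X, (∀ i, x ∉ A i) → f x = 0 := by
    intro x hx
    show (∑ j, Set.indicator (A j) (fun _ => c j) x) = (0 : K)
    exact Finset.sum_eq_zero fun i _ => Set.indicator_of_notMem (hx i) _
  -- the two sup sets
  set Sf : Set ℝ := {r : ℝ | ∃ x : X, r = ‖f x‖ * normFun R μ x} with hSf
  set Sr : Set ℝ := insert (0 : ℝ) {r : ℝ | ∃ i, r = ‖c i‖ * setNorm R μ (A i)} with hSr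
  have hSfne : Sf.Nonempty := ⟨_, hX.some, rfl⟩
  have hSfbdd : BddAbove Sf := by
    refine ⟨(∑ i, ‖c i‖) * setNorm R μ Set.univ, ?_⟩
    rintro r ⟨x, rfl⟩
    refine mul_le_mul ?_ (aux_normFun_le h (aux_univ_mem h) (Set.mem_univ x))
      (aux_normFun_nonneg h x) (Finset.sum_nonneg fun i _ => norm_nonneg _)
    refine le_trans (norm_sum_le _ _) (Finset.sum_le_sum fun i _ => ?_)
    exact norm_indicator_le_norm_self _ x
  have hSrne : Sr.Nonempty := ⟨0, Set.mem_insert _ _⟩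
  have hSrbdd : BddAbove Sr := by
    have hfin : ({r : ℝ | ∃ i, r = ‖c i‖ * setNorm R μ (A i)}).Finite := by
      have : {r : ℝ | ∃ i, r = ‖c i‖ * setNorm R μ (A i)} =
          Set.range (fun i => ‖c i‖ * setNorm R μ (A i)) := by
        ext r; simp [eq_comm]
      rw [this]; exact Set.finite_range _
    exact (hfin.insert 0).bddAbove
  have hSfnn : (0 : ℝ) ≤ sSup Sf := by
    refine le_trans ?_ (le_csSup hSfbdd (⟨hX.some, rfl⟩ : (‖f hX.some‖ * normFun R μ hX.some) ∈ Sf))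
    exact mul_nonneg (norm_nonneg _) (aux_normFun_nonneg h _)
  show sSup Sf = sSup Sr
  apply le_antisymm
  · apply csSup_le hSfne
    rintro r ⟨x, rfl⟩
    by_cases hx : ∃ i, x ∈ A i
    · obtain ⟨i, hxi⟩ := hx
      rw [hfval i x hxi]
      refine le_trans (mul_le_mul_of_nonneg_left (aux_normFun_le h (hA i) hxi)
        (norm_nonneg _)) ?_
      exact le_csSup hSrbdd (Set.mem_insert_of_mem _ ⟨i, rfl⟩)
    · push_neg at hx
      rw [hfval0 x hx]
      simpa using le_csSup hSrbdd (Set.mem_insert _ _)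
  · apply csSup_le hSrne
    rintro r (rfl | ⟨i, rfl⟩)
    · exact hSfnn
    · by_cases hc : c i = 0
      · simpa [hc] using hSfnn
      · have hcpos : (0 : ℝ) < ‖c i‖ := norm_pos_iff.mpr hc
        have hkey : setNorm R μ (A i) ≤ sSup Sf / ‖c i‖ := by
          refine aux_setNorm_le_of_normFun hna h (hA i)
            (div_nonneg hSfnn (le_of_lt hcpos)) ?_
          intro x hx
          rw [le_div_iff₀ hcpos]
          have : ‖f x‖ * normFun R μ x ≤ sSup Sf := le_csSup hSfbdd ⟨x, rfl⟩
          rw [hfval i x hx] at this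
          calc normFun R μ x * ‖c i‖ = ‖c i‖ * normFun R μ x := mul_comm _ _
            _ ≤ sSup Sf := this
        calc ‖c i‖ * setNorm R μ (A i) ≤ ‖c i‖ * (sSup Sf / ‖c i‖) :=
              mul_le_mul_of_nonneg_left hkey (le_of_lt hcpos)
          _ = sSup Sf := by field_simp

end Aux

/-- The map induced by a measure algebra isomorphism on step functions is
an isometry for the seminorms `‖·‖_μ` and `‖·‖_ν`. -/
theorem stmt11 {X Y K : Type*} [NontriviallyNormedField K] [CompleteSpace K]
    (hna : IsNonarchimedean (norm : K → ℝ))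
    (R : Set (Set X)) (μ : Set X → K) (hXp : IsProbSpace R μ)
    (R' : Set (Set Y)) (ν : Set Y → K) (hYp : IsProbSpace R' ν)
    (Φ : Set X → Set Y) (hΦ : IsMeasAlgIso R μ R' ν Φ)
    (m : ℕ) (A : Fin m → Set X) (hA : ∀ i, A i ∈ R)
    (hdisj : ∀ i j : Fin m, i ≠ j → Disjoint (A i) (A j)) (c : Fin m → K) :
    fNorm R' ν (fun y => ∑ i, Set.indicator (Φ (A i)) (fun _ => c i) y) =
      fNorm R μ (fun x => ∑ i, Set.indicator (A i) (fun _ => c i) x) := by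
  obtain ⟨hbij, hU, hCpl, hMeq⟩ := hΦ
  have hmemR' : ∀ B ∈ R, Φ B ∈ R' := fun B hB => hbij.1 hB
  have hsub : ∀ B ∈ R, ∀ D ∈ R, (B ⊆ D ↔ Φ B ⊆ Φ D) := by
    intro B hB D hD
    constructor
    · intro hBD
      have h1 : Φ (B ∪ D) = Φ B ∪ Φ D := hU B hB D hD
      rw [Set.union_eq_self_of_subset_left hBD] at h1
      rw [h1]; exact Set.subset_union_left
    · intro hBD
      have h1 : Φ (B ∪ D) = Φ B ∪ Φ D := hU B hB D hD
      rw [Set.union_eq_self_of_subset_left hBD] at h1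
      have h2 : B ∪ D = D := hbij.2.1 ((hXp.1.2 B hB D hD).2.1) hD h1
      rw [← h2]; exact Set.subset_union_left
  have hsetNorm : ∀ B ∈ R, setNorm R' ν (Φ B) = setNorm R μ B := by
    intro B hB
    unfold setNorm
    congr 1
    ext r
    constructor
    · rintro ⟨B', hB', hsub', rfl⟩
      obtain ⟨D, hD, rfl⟩ := hbij.2.2 hB'
      exact ⟨D, hD, (hsub D hD B hB).mpr hsub', by rw [hMeq D hD]⟩
    · rintro ⟨D, hD, hDB, rfl⟩
      exact ⟨Φ D, hmemR' D hD, (hsub D hD B hB).mp hDB, by rw [hMeq D hD]⟩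
  have hcompl_mem : ∀ B ∈ R, Set.univ \ B ∈ R := fun B hB => (hXp.1.2 _ hXp.2.1 B hB).2.2
  have hinter : ∀ B ∈ R, ∀ D ∈ R, Φ (B ∩ D) = Φ B ∩ Φ D := by
    intro B hB D hD
    have h1 : B ∩ D = Set.univ \ ((Set.univ \ B) ∪ (Set.univ \ D)) := by
      ext x; simp [not_or]
    have hBc := hcompl_mem B hB
    have hDc := hcompl_mem D hD
    have hUc : (Set.univ \ B) ∪ (Set.univ \ D) ∈ R := (hXp.1.2 _ hBc _ hDc).2.1
    rw [h1, hCpl _ hUc, hU _ hBc _ hDc, hCpl B hB, hCpl D hD]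
    ext y; simp [not_or]
  have hempty : Φ ∅ = ∅ := by
    have h1 := hinter Set.univ hXp.2.1 (Set.univ \ Set.univ) (hcompl_mem _ hXp.2.1)
    rw [hCpl _ hXp.2.1] at h1
    simpa using h1
  have hdisj' : ∀ i j : Fin m, i ≠ j → Disjoint (Φ (A i)) (Φ (A j)) := by
    intro i j hij
    rw [Set.disjoint_iff_inter_eq_empty, ← hinter _ (hA i) _ (hA j),
      Set.disjoint_iff_inter_eq_empty.mp (hdisj i j hij), hempty]
  rw [aux_fNorm_step hna hYp m (fun i => Φ (A i)) (fun i => hmemR' _ (hA i)) hdisj' c,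
    aux_fNorm_step hna hXp m A hA hdisj c]
  have heq : ∀ i : Fin m, setNorm R' ν (Φ (A i)) = setNorm R μ (A i) :=
    fun i => hsetNorm _ (hA i)
  simp only [heq]
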